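/- Let R be a relation on ℤ satisfying the step condition. If b is chained to c (Relation.ReflTransGen R b c) and b < c, then for every d with b ≤ d < c the one-step relation R d (d+1) holds. (Lemma 3.4 of the paper: a chain from a lower state to a higher state must contain a monotone chain of single upward steps through every intermediate state.) -/
import Mathlib

/-- Lemma 3.4: a chain from a lower state to a higher state must contain a
monotone chain of single upward steps through every intermediate state. -/
theorem step_up_of_chained {R : ℤ → ℤ → Prop}
    (hstep : ∀ b c : ℤ, R b c → |b - c| ≤ 1)
    {b c : ℤ} (hchain : Relation.ReflTransGen R b c) (hbc : b < c) :
    ∀ d : ℤ, b ≤ d → d < c → R d (d + 1) := by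
  clear hbc
  induction hchain using Relation.ReflTransGen.head_induction_on with
  | refl => intro d h1 h2; omega
  | @head a b' hab htail ih =>
    intro d h1 h2
    by_cases h : b' ≤ d
    · exact ih d h h2
    · have := hstep _ _ hab
      have hd : d = a ∧ b' = a + 1 := by
        rw [abs_le] at this; omega
      obtain ⟨rfl, rfl⟩ := hd
      exact hab
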